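/- For odd t = 4k−1 with 3 ∤ t, the periodic coloring of ℤ with pattern 123145 (period 6) is a (1,2,2,2,2)-packing coloring of G(ℤ,{2,t}). -/

import Mathlib

def distG (t : ℤ) : SimpleGraph ℤ :=
  SimpleGraph.fromRel (fun i j => |i - j| = 2 ∨ |i - j| = t)

lemma distG_adj_iff (t u v : ℤ) :
    (distG t).Adj u v ↔ u ≠ v ∧ (|u - v| = 2 ∨ |u - v| = t) := by
  simp only [distG, SimpleGraph.fromRel_adj]
  rw [abs_sub_comm v u]
  tauto

lemma reach_even (t u v : ℤ) (h : 2 ∣ (v - u)) : (distG t).Reachable u v := by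
  have key : ∀ n : ℕ, ∀ a : ℤ, (distG t).Reachable a (a + 2 * n) := by
    intro n
    induction n with
    | zero => intro a; simpa using SimpleGraph.Reachable.refl a
    | succ n ih =>
      intro a
      have h1 : (distG t).Adj a (a + 2) := by
        rw [distG_adj_iff]
        constructor
        · omega
        · left; rw [show a - (a + 2) = -2 by ring]; norm_num
      have h2 := ih (a + 2)
      rw [show a + 2 + 2 * (n : ℤ) = a + 2 * ((n : ℤ) + 1) by ring] at h2
      have := h1.reachable.trans h2
      simpa using this
  rcases le_total u v with h' | h'
  · obtain ⟨m, hm⟩ : ∃ n : ℕ, v = u + 2 * (n : ℤ) := ⟨((v - u) / 2).toNat, by omega⟩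
    rw [hm]; exact key m u
  · obtain ⟨m, hm⟩ : ∃ n : ℕ, u = v + 2 * (n : ℤ) := ⟨((u - v) / 2).toNat, by omega⟩
    rw [hm]; exact (key m v).symm

theorem stmt11 (t k : ℤ) (hk : t = 4 * k - 1) (hnd : ¬ (3 ∣ t)) (h3 : 3 ≤ t)
    (f : ℤ → ℕ)
    (hf : ∀ n : ℤ, f n = if n % 6 = 0 then 1 else if n % 6 = 1 then 2
      else if n % 6 = 2 then 3 else if n % 6 = 3 then 1 else if n % 6 = 4 then 4 else 5) :
    ∀ u v : ℤ, u ≠ v → f u = f v →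
      (f u = 1 → ¬ (distG t).Adj u v) ∧ (f u ≠ 1 → 2 < (distG t).dist u v) := by
  intro u v huv hfeq
  have hfu := hf u
  have hfv := hf v
  constructor
  · -- color 1 case
    intro h1 hadj
    rw [distG_adj_iff] at hadj
    obtain ⟨-, habs⟩ := hadj
    have hu6 : u % 6 = 0 ∨ u % 6 = 3 := by
      by_contra hc
      push_neg at hc
      rw [hfu] at h1
      obtain ⟨h0a, h0b⟩ : (0:ℤ) ≤ u % 6 ∧ u % 6 < 6 := ⟨Int.emod_nonneg u (by norm_num), Int.emod_lt_of_pos u (by norm_num)⟩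
      interval_cases h : u % 6 <;> revert h1 hc <;> norm_num
    have hv6 : v % 6 = 0 ∨ v % 6 = 3 := by
      rw [h1] at hfeq
      by_contra hc
      push_neg at hc
      rw [hfv] at hfeq
      obtain ⟨h0a, h0b⟩ : (0:ℤ) ≤ v % 6 ∧ v % 6 < 6 := ⟨Int.emod_nonneg v (by norm_num), Int.emod_lt_of_pos v (by norm_num)⟩
      interval_cases h : v % 6 <;> revert hfeq hc <;> norm_num
    rcases habs with h | h <;> rw [abs_eq (by omega)] at h <;> omega
  · -- colors 2..5 case
    intro hne
    have h6 : 6 ∣ (u - v) := by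
      rw [hfu] at hne hfeq
      rw [hfv] at hfeq
      obtain ⟨h0ua, h0ub⟩ : (0:ℤ) ≤ u % 6 ∧ u % 6 < 6 := ⟨Int.emod_nonneg u (by norm_num), Int.emod_lt_of_pos u (by norm_num)⟩
      obtain ⟨h0va, h0vb⟩ : (0:ℤ) ≤ v % 6 ∧ v % 6 < 6 := ⟨Int.emod_nonneg v (by norm_num), Int.emod_lt_of_pos v (by norm_num)⟩
      have : u % 6 = v % 6 := by
        interval_cases hu' : u % 6 <;> interval_cases hv' : v % 6 <;>
          first | rfl | (revert hne hfeq; norm_num)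
      omega
    have hreach : (distG t).Reachable u v := reach_even t u v (by omega)
    by_contra hle
    push_neg at hle
    obtain ⟨p, hp⟩ := hreach.exists_walk_length_eq_dist
    have hlen : p.length ≤ 2 := hp ▸ hle
    -- helper: no adjacency summing
    have habs_imp : ∀ a b : ℤ, (distG t).Adj a b → a - b = 2 ∨ a - b = -2 ∨ a - b = t ∨ a - b = -t := by
      intro a b hab
      rw [distG_adj_iff] at hab
      rcases hab.2 with h | h <;> rw [abs_eq (by omega)] at h <;> omega
    interval_cases hl : p.length
    · have : u = v := by
        have := p.getVert_length
        rw [hl] at this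
        rw [← p.getVert_zero, this]
      exact huv this
    · have hadj : (distG t).Adj u v := by
        have h01 := p.adj_getVert_succ (i := 0) (by omega)
        rwa [p.getVert_zero, show (0+1) = p.length from hl.symm, p.getVert_length] at h01
      have := habs_imp u v hadj
      omega
    · have h01 := p.adj_getVert_succ (i := 0) (by omega)
      have h12 := p.adj_getVert_succ (i := 1) (by omega)
      rw [p.getVert_zero] at h01
      rw [show (1+1) = p.length from hl.symm, p.getVert_length] at h12
      have e1 := habs_imp u (p.getVert 1) h01
      have e2 := habs_imp (p.getVert 1) v h12
      omega
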